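/- (Injectivity with quantitative lower bound) If the kernel is admissible, i.e., Σ_{j=0}^J |γ_j(r)|² = 1 for all r and β = min_{1≤r≤k} |γ_0(r)|² > 0, then for all f, f' ∈ L²(G): ‖S[P_J]f − S[P_J]f'‖²_{2,J} ≥ ‖φ ∗ (f − f')‖² ≥ β‖f − f'‖². In particular the scattering transform is injective. -/

import Mathlib

open scoped BigOperators
open MeasureTheory

noncomputable def conv {G : Type*} [Group G] [Fintype G] (f g : G → ℂ) : G → ℂ :=
  fun x => (Fintype.card G : ℂ)⁻¹ * ∑ y, f y * g (y⁻¹ * x)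

noncomputable def nsq {G : Type*} [Fintype G] (f : G → ℂ) : ℝ :=
  (Fintype.card G : ℝ)⁻¹ * ∑ x, Complex.normSq (f x)

noncomputable def ip {G : Type*} [Fintype G] (f g : G → ℂ) : ℂ :=
  (Fintype.card G : ℂ)⁻¹ * ∑ x, f x * (starRingEnd ℂ) (g x)

noncomputable def gwavelet {G : Type*} [Group G] {k : ℕ} (d : Fin k → ℕ)
    (π : (r : Fin k) → G →* Matrix (Fin (d r)) (Fin (d r)) ℂ)
    (γ : Fin k → ℂ) : G → ℂ :=
  fun x => ∑ r, (d r : ℂ) * γ r * Matrix.trace (π r x)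

noncomputable def Upath {G : Type*} [Group G] [Fintype G] {J : ℕ}
    (ψ : Fin J → G → ℂ) : List (Fin J) → (G → ℂ) → G → ℂ
  | [], f => f
  | j :: p, f => Upath ψ p fun x => ((‖conv (ψ j) f x‖ : ℝ) : ℂ)

noncomputable def Sop {G : Type*} [Group G] [Fintype G] {k J : ℕ} (d : Fin k → ℕ)
    (π : (r : Fin k) → G →* Matrix (Fin (d r)) (Fin (d r)) ℂ)
    (γ : Fin (J + 1) → Fin k → ℂ) (p : List (Fin J)) (f : G → ℂ) : G → ℂ :=
  conv (gwavelet d π (γ 0)) (Upath (fun j => gwavelet d π (γ j.succ)) p f)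


set_option linter.unusedSectionVars false
set_option linter.unusedVariables false
set_option linter.unreachableTactic false
set_option linter.unusedTactic false


section main
variable {G : Type*} [Group G] [Fintype G]
  {k : ℕ} {d : Fin k → ℕ}
  {π : (r : Fin k) → G →* Matrix (Fin (d r)) (Fin (d r)) ℂ}

lemma trace_std (n : Type) [Fintype n] [DecidableEq n] (j l : n) :
    Matrix.trace (Matrix.single j l (1:ℂ)) = if j = l then 1 else 0 := by
  simp [Matrix.trace, Matrix.diag, Matrix.single, ite_and]
  rcases eq_or_ne j l with h | h <;> simp [h, eq_comm]

lemma sandwich_apply {m n p q : Type*} [Fintype n] [Fintype p] [DecidableEq n] [DecidableEq p]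
    (A : Matrix m n ℂ) (B : Matrix p q ℂ) (j : n) (l : p) (i : m) (kk : q) :
    (A * Matrix.single j l (1:ℂ) * B) i kk = A i j * B l kk := by
  rw [Matrix.mul_apply]
  simp [Matrix.mul_apply, Matrix.single, ite_and, Finset.mul_sum, Finset.sum_mul]

lemma pi_inv (hunit : ∀ r x, π r x ∈ Matrix.unitaryGroup (Fin (d r)) ℂ)
    (r : Fin k) (x : G) : π r x⁻¹ = star (π r x) := by
  have h := (Unitary.mem_iff.mp (hunit r x))
  calc π r x⁻¹ = π r x⁻¹ * (π r x * star (π r x)) := by rw [h.2, mul_one]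
  _ = (π r x⁻¹ * π r x) * star (π r x) := by rw [mul_assoc]
  _ = star (π r x) := by rw [← map_mul, inv_mul_cancel, map_one, one_mul]

lemma intertwine (r s : Fin k) (E : Matrix (Fin (d r)) (Fin (d s)) ℂ) (y : G) :
    π r y * (∑ x, π r x * E * π s x⁻¹) = (∑ x, π r x * E * π s x⁻¹) * π s y := by
  simp only [Matrix.mul_sum, Matrix.sum_mul]
  rw [← Equiv.sum_comp (Equiv.mulLeft y) (fun x => (π r x * E * π s x⁻¹) * π s y)]
  apply Finset.sum_congr rfl
  intro x _
  have : (Equiv.mulLeft y) x = y * x := rfl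
  rw [this, map_mul, mul_inv_rev, map_mul]
  simp only [Matrix.mul_assoc]
  rw [← map_mul, inv_mul_cancel, map_one, Matrix.mul_one]

lemma entry_sum (hunit : ∀ r x, π r x ∈ Matrix.unitaryGroup (Fin (d r)) ℂ)
    (r s : Fin k) (i : Fin (d r)) (j : Fin (d r)) (kk : Fin (d s)) (l : Fin (d s)) :
    (∑ x : G, π r x * Matrix.single j l (1:ℂ) * π s x⁻¹) i kk
      = ∑ x : G, (π r x) i j * (starRingEnd ℂ) ((π s x) kk l) := by
  rw [Matrix.sum_apply]
  apply Finset.sum_congr rfl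
  intro x _
  rw [sandwich_apply, pi_inv hunit, Matrix.star_apply]
  rfl

lemma schur_ne (hunit : ∀ r x, π r x ∈ Matrix.unitaryGroup (Fin (d r)) ℂ)
    (hneq : ∀ (r s : Fin k), r ≠ s → ∀ T : Matrix (Fin (d r)) (Fin (d s)) ℂ,
      (∀ x, π r x * T = T * π s x) → T = 0)
    {r s : Fin k} (hrs : r ≠ s) (i j : Fin (d r)) (kk l : Fin (d s)) :
    ∑ x : G, (π r x) i j * (starRingEnd ℂ) ((π s x) kk l) = 0 := by
  rw [← entry_sum hunit]
  rw [hneq r s hrs _ (fun y => intertwine r s _ y)]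
  rfl

lemma schur_eq (hdpos : ∀ r, 0 < d r)
    (hunit : ∀ r x, π r x ∈ Matrix.unitaryGroup (Fin (d r)) ℂ)
    (hirr : ∀ (r : Fin k) (M : Matrix (Fin (d r)) (Fin (d r)) ℂ),
      (∀ x, M * π r x = π r x * M) → ∃ c : ℂ, M = c • (1 : Matrix (Fin (d r)) (Fin (d r)) ℂ))
    (r : Fin k) (i j kk l : Fin (d r)) :
    ∑ x : G, (π r x) i j * (starRingEnd ℂ) ((π r x) kk l)
      = (if i = kk then 1 else 0) * (if j = l then 1 else 0)
        * ((Fintype.card G : ℂ) / (d r : ℂ)) := by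
  set T : Matrix (Fin (d r)) (Fin (d r)) ℂ := ∑ x : G, π r x * Matrix.single j l (1:ℂ) * π r x⁻¹ with hT
  obtain ⟨c, hc⟩ := hirr r T (fun y => (intertwine r r _ y).symm)
  have htr : Matrix.trace T = (Fintype.card G : ℂ) * (if j = l then 1 else 0) := by
    rw [hT, Matrix.trace_sum]
    have : ∀ x : G, Matrix.trace (π r x * Matrix.single j l (1:ℂ) * π r x⁻¹)
        = (if j = l then 1 else 0) := by
      intro x
      rw [Matrix.trace_mul_comm, ← mul_assoc, ← map_mul, inv_mul_cancel, map_one, one_mul,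
        trace_std]
    rw [Finset.sum_congr rfl (fun x _ => this x), Finset.sum_const, Finset.card_univ,
      nsmul_eq_mul]
  have htr2 : Matrix.trace T = c * (d r : ℂ) := by
    rw [hc]
    simp [Matrix.trace_smul, Matrix.trace_one]
  have hdne : (d r : ℂ) ≠ 0 := by
    exact_mod_cast (Nat.cast_ne_zero (R := ℂ)).mpr (hdpos r).ne'
  have hcval : c = (Fintype.card G : ℂ) * (if j = l then 1 else 0) / (d r : ℂ) := by
    field_simp at htr2 ⊢
    rw [← htr2, htr]
  rw [← entry_sum hunit, ← hT, hc, Matrix.smul_apply, Matrix.one_apply, hcval]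
  rcases eq_or_ne i kk with h | h <;> rcases eq_or_ne j l with h2 | h2 <;>
    simp [h, h2] <;> ring
end main


section chars
variable {G : Type*} [Group G] [Fintype G]
  {k : ℕ} {d : Fin k → ℕ}
  {π : (r : Fin k) → G →* Matrix (Fin (d r)) (Fin (d r)) ℂ}

variable (schur_ne' : ∀ {r s : Fin k}, r ≠ s → ∀ (i j : Fin (d r)) (kk l : Fin (d s)),
    ∑ x : G, (π r x) i j * (starRingEnd ℂ) ((π s x) kk l) = 0)
  (schur_eq' : ∀ (r : Fin k) (i j kk l : Fin (d r)),
    ∑ x : G, (π r x) i j * (starRingEnd ℂ) ((π r x) kk l)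
      = (if i = kk then 1 else 0) * (if j = l then 1 else 0)
        * ((Fintype.card G : ℂ) / (d r : ℂ)))

include schur_ne' schur_eq' in
lemma char_orth (hdpos : ∀ r, 0 < d r) (r s : Fin k) :
    ∑ x : G, Matrix.trace (π r x) * (starRingEnd ℂ) (Matrix.trace (π s x))
      = if r = s then (Fintype.card G : ℂ) else 0 := by
  have hx : ∀ x : G, Matrix.trace (π r x) * (starRingEnd ℂ) (Matrix.trace (π s x))
      = ∑ t, ∑ u, (π r x) t t * (starRingEnd ℂ) ((π s x) u u) := by
    intro x
    simp only [Matrix.trace, Matrix.diag, map_sum, Finset.sum_mul, Finset.mul_sum]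
    rw [Finset.sum_comm]
  rw [Finset.sum_congr rfl (fun x _ => hx x), Finset.sum_comm]
  rw [Finset.sum_congr rfl (fun t _ => Finset.sum_comm)]
  rcases eq_or_ne r s with h | h
  · subst h
    simp only [if_pos rfl, ↓reduceIte]
    rw [Finset.sum_congr rfl (fun t _ => Finset.sum_congr rfl (fun u _ => schur_eq' r t t u u))]
    have hd : ((d r : ℂ)) ≠ 0 := Nat.cast_ne_zero.mpr (hdpos r).ne'
    have inner : ∀ t : Fin (d r),
        (∑ u : Fin (d r), (if t = u then (1:ℂ) else 0) * (if t = u then 1 else 0)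
          * ((Fintype.card G : ℂ) / (d r : ℂ))) = (Fintype.card G : ℂ) / (d r : ℂ) := by
      intro t
      rw [Finset.sum_eq_single t (fun u _ hu => by rw [if_neg (Ne.symm hu)]; ring) (by simp)]
      simp
    rw [Finset.sum_congr rfl (fun t _ => inner t), Finset.sum_const, Finset.card_univ,
      Fintype.card_fin, nsmul_eq_mul]
    field_simp
  · simp only [if_neg h]
    rw [Finset.sum_congr rfl (fun t _ => Finset.sum_congr rfl
      (fun u _ => schur_ne' h t t u u))]
    simp
end chars


section dimcount
variable {G : Type*} [Group G] [Fintype G]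
  {k : ℕ} {d : Fin k → ℕ}
  {π : (r : Fin k) → G →* Matrix (Fin (d r)) (Fin (d r)) ℂ}

variable (chOrth : ∀ r s : Fin k,
    ∑ x : G, Matrix.trace (π r x) * (starRingEnd ℂ) (Matrix.trace (π s x))
      = if r = s then (Fintype.card G : ℂ) else 0)

include chOrth in
lemma sum_d_sq (hcard : Nat.card (ConjClasses G) = k) :
    ∑ r, (d r : ℂ) * (d r : ℂ) = (Fintype.card G : ℂ) := by
  classical
  haveI : Fintype (ConjClasses G) := Fintype.ofFinite _
  set N : ℂ := (Fintype.card G : ℂ) with hN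
  have hNne : N ≠ 0 := Nat.cast_ne_zero.mpr Fintype.card_ne_zero
  have hconst : ∀ r : Fin k, ∀ a b : G, IsConj a b →
      Matrix.trace (π r a) = Matrix.trace (π r b) := by
    intro r a b hab
    obtain ⟨c, hc⟩ := isConj_iff.mp hab
    rw [← hc, map_mul, map_mul, Matrix.trace_mul_comm, ← Matrix.mul_assoc, ← map_mul,
      inv_mul_cancel, map_one, Matrix.one_mul]
  set χbar : Fin k → ConjClasses G → ℂ :=
    fun r => Quotient.lift (fun x => Matrix.trace (π r x)) (fun a b hab => hconst r a b hab)
    with hχbar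
  have hmk : ∀ (r : Fin k) (x : G), χbar r (ConjClasses.mk x) = Matrix.trace (π r x) :=
    fun r x => rfl
  have pair : ∀ (g : Fin k → ℂ) (s : Fin k),
      ∑ x : G, (∑ r, g r * Matrix.trace (π r x)) * (starRingEnd ℂ) (Matrix.trace (π s x))
        = g s * N := by
    intro g s
    simp only [Finset.sum_mul]
    rw [Finset.sum_comm]
    have h1 : ∀ r : Fin k, ∑ x : G,
        g r * Matrix.trace (π r x) * (starRingEnd ℂ) (Matrix.trace (π s x))
          = g r * (if r = s then N else 0) := by
      intro r
      simp only [mul_assoc, ← Finset.mul_sum]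
      rw [chOrth r s]
    rw [Finset.sum_congr rfl fun r _ => h1 r]
    simp [mul_ite, Finset.sum_ite_eq']
  have hk : 0 < k := hcard ▸ Nat.card_pos
  haveI : Nonempty (Fin k) := ⟨⟨0, hk⟩⟩
  have hli : LinearIndependent ℂ χbar := by
    rw [Fintype.linearIndependent_iff]
    intro g hg s
    have hfun : ∀ x : G, (∑ r, g r * Matrix.trace (π r x)) = 0 := by
      intro x
      have := congrFun hg (ConjClasses.mk x)
      simpa [Finset.sum_apply, hmk] using this
    have := pair g s
    rw [Finset.sum_congr rfl (fun x _ => by rw [hfun x, zero_mul]), Finset.sum_const_zero] at this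
    exact (mul_eq_zero.mp this.symm).resolve_right hNne
  have hcardeq : Fintype.card (Fin k) = Module.finrank ℂ (ConjClasses G → ℂ) := by
    rw [Fintype.card_fin, Module.finrank_pi, ← Nat.card_eq_fintype_card, hcard]
  set B := basisOfLinearIndependentOfCardEqFinrank hli hcardeq with hBdef
  have hB : ⇑B = χbar := coe_basisOfLinearIndependentOfCardEqFinrank _ _
  set δ : ConjClasses G → ℂ := fun c => if c = ConjClasses.mk (1:G) then 1 else 0 with hδ
  have hrepr := B.sum_repr δ
  set a : Fin k → ℂ := fun r => B.repr δ r with ha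
  have hfun : ∀ x : G, (∑ r, a r * Matrix.trace (π r x)) = if x = 1 then 1 else 0 := by
    intro x
    have h2 := congrFun hrepr (ConjClasses.mk x)
    rw [Finset.sum_apply] at h2
    simp only [Pi.smul_apply, smul_eq_mul, hB] at h2
    have h3 : δ (ConjClasses.mk x) = if x = 1 then 1 else 0 := by
      rw [hδ]
      by_cases hx : x = 1
      · simp [hx]
      · simp only []
        rw [if_neg hx, if_neg]
        intro hcontra
        exact hx (isConj_one_right.mp (isConj_comm.mp
          (ConjClasses.mk_eq_mk_iff_isConj.mp hcontra)))
    calc ∑ r, a r * Matrix.trace (π r x) = ∑ r, a r * χbar r (ConjClasses.mk x) := by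
          simp only [hmk]
      _ = δ (ConjClasses.mk x) := h2
      _ = if x = 1 then 1 else 0 := h3
  have haval : ∀ s : Fin k, a s = (d s : ℂ) / N := by
    intro s
    have h4 := pair a s
    have h5 : ∑ x : G, (∑ r, a r * Matrix.trace (π r x))
        * (starRingEnd ℂ) (Matrix.trace (π s x)) = (d s : ℂ) := by
      rw [Finset.sum_congr rfl (fun x _ => by rw [hfun x])]
      simp only [ite_mul, one_mul, zero_mul]
      rw [Finset.sum_ite_eq' Finset.univ (1:G)]
      simp [Matrix.trace_one]
    rw [h5] at h4
    field_simp at h4 ⊢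
    rw [h4]
  have h6 := hfun 1
  simp only [map_one, Matrix.trace_one, Fintype.card_fin, if_pos rfl] at h6
  rw [Finset.sum_congr rfl (fun r (_ : r ∈ Finset.univ) => by rw [haval r])] at h6
  have h7 : ∑ r, (d r:ℂ)/N * (d r:ℂ) * N = ∑ r, (d r:ℂ) * (d r:ℂ) := by
    apply Finset.sum_congr rfl; intro r _; field_simp
  simp only [if_true] at h6
  rw [← h7, ← Finset.sum_mul, h6, one_mul]
end dimcount


section pars
variable {G : Type*} [Group G] [Fintype G]
  {k : ℕ} {d : Fin k → ℕ}
  {π : (r : Fin k) → G →* Matrix (Fin (d r)) (Fin (d r)) ℂ}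

variable (schur_ne' : ∀ {r s : Fin k}, r ≠ s → ∀ (i j : Fin (d r)) (kk l : Fin (d s)),
    ∑ x : G, (π r x) i j * (starRingEnd ℂ) ((π s x) kk l) = 0)
  (schur_eq' : ∀ (r : Fin k) (i j kk l : Fin (d r)),
    ∑ x : G, (π r x) i j * (starRingEnd ℂ) ((π r x) kk l)
      = (if i = kk then 1 else 0) * (if j = l then 1 else 0)
        * ((Fintype.card G : ℂ) / (d r : ℂ)))
  (hdpos : ∀ r, 0 < d r)

noncomputable def mcvec (d : Fin k → ℕ)
    (π : (r : Fin k) → G →* Matrix (Fin (d r)) (Fin (d r)) ℂ) :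
    (Σ r : Fin k, Fin (d r) × Fin (d r)) → EuclideanSpace ℂ G :=
  fun a => WithLp.toLp 2 fun x => ((Real.sqrt (d a.1) / Real.sqrt (Fintype.card G) : ℝ) : ℂ)
    * (π a.1 x) a.2.1 a.2.2

include schur_ne' schur_eq' hdpos in
lemma mcvec_orthonormal : Orthonormal ℂ (mcvec d π) := by
  classical
  rw [orthonormal_iff_ite]
  rintro ⟨r, i, j⟩ ⟨s, kk, l⟩
  have hinner : (inner ℂ (mcvec d π ⟨r, (i, j)⟩) (mcvec d π ⟨s, (kk, l)⟩) : ℂ)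
      = ((Real.sqrt (d r) / Real.sqrt (Fintype.card G) : ℝ) : ℂ)
        * ((Real.sqrt (d s) / Real.sqrt (Fintype.card G) : ℝ) : ℂ)
        * (starRingEnd ℂ) (∑ x : G, (π r x) i j * (starRingEnd ℂ) ((π s x) kk l)) := by
    rw [PiLp.inner_apply]
    simp only [RCLike.inner_apply, mcvec, PiLp.toLp_apply, map_sum, map_mul, Complex.conj_conj,
      Complex.conj_ofReal, Finset.mul_sum]
    apply Finset.sum_congr rfl
    intro x _
    ring
  rcases eq_or_ne r s with h | h
  · subst h
    rw [hinner, schur_eq']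
    have hcard : (0:ℝ) < Fintype.card G := by positivity
    have hd : (0:ℝ) < d r := by exact_mod_cast hdpos r
    rcases eq_or_ne i kk with h1 | h1 <;> rcases eq_or_ne j l with h2 | h2
    · subst h1; subst h2
      rw [if_pos rfl, if_pos rfl, if_pos rfl, one_mul, one_mul]
      rw [show ((Fintype.card G : ℂ) / (d r : ℂ))
          = (((Fintype.card G : ℝ) / (d r : ℝ) : ℝ) : ℂ) from by push_cast; ring]
      rw [Complex.conj_ofReal, ← Complex.ofReal_mul, ← Complex.ofReal_mul]
      norm_cast
      rw [div_mul_div_comm, Real.mul_self_sqrt hd.le, Real.mul_self_sqrt hcard.le]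
      field_simp
    · have hne : (⟨r, (i, j)⟩ : Σ t : Fin k, Fin (d t) × Fin (d t)) ≠ ⟨r, (kk, l)⟩ :=
        fun hh => h2 (Prod.ext_iff.mp (eq_of_heq (Sigma.ext_iff.mp hh).2)).2
      rw [if_neg h2, mul_zero, zero_mul, map_zero, mul_zero, if_neg hne]
    · have hne : (⟨r, (i, j)⟩ : Σ t : Fin k, Fin (d t) × Fin (d t)) ≠ ⟨r, (kk, l)⟩ :=
        fun hh => h1 (Prod.ext_iff.mp (eq_of_heq (Sigma.ext_iff.mp hh).2)).1
      rw [if_neg h1, zero_mul, zero_mul, map_zero, mul_zero, if_neg hne]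
    · have hne : (⟨r, (i, j)⟩ : Σ t : Fin k, Fin (d t) × Fin (d t)) ≠ ⟨r, (kk, l)⟩ :=
        fun hh => h1 (Prod.ext_iff.mp (eq_of_heq (Sigma.ext_iff.mp hh).2)).1
      rw [if_neg h1, zero_mul, zero_mul, map_zero, mul_zero, if_neg hne]
  · have hne : (⟨r, (i, j)⟩ : Σ t : Fin k, Fin (d t) × Fin (d t)) ≠ ⟨s, (kk, l)⟩ :=
      fun hh => h (Sigma.ext_iff.mp hh).1
    rw [hinner, schur_ne' h, map_zero, mul_zero, if_neg hne]
end pars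

section pars2
variable {G : Type*} [Group G] [Fintype G]
  {k : ℕ} {d : Fin k → ℕ}
  {π : (r : Fin k) → G →* Matrix (Fin (d r)) (Fin (d r)) ℂ}

variable (hon : Orthonormal ℂ (mcvec d π))
  (hdim : ∑ r, (d r : ℂ) * (d r : ℂ) = (Fintype.card G : ℂ))
  (hdpos : ∀ r, 0 < d r)

include hon hdim hdpos in
lemma parseval (h : G → ℂ) :
    ∑ x, Complex.normSq (h x)
      = ∑ r : Fin k, ∑ i : Fin (d r), ∑ j : Fin (d r),
          ((d r : ℝ) / (Fintype.card G : ℝ))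
            * Complex.normSq (∑ x, (starRingEnd ℂ) ((π r x) i j) * h x) := by
  classical
  have hdim' : ∑ r, d r * d r = Fintype.card G := by
    have := hdim
    exact_mod_cast this
  have hcards : Fintype.card (Σ r : Fin k, Fin (d r) × Fin (d r))
      = Module.finrank ℂ (EuclideanSpace ℂ G) := by
    rw [finrank_euclideanSpace]
    simp [Fintype.card_sigma, hdim']
  haveI : Nonempty (Σ r : Fin k, Fin (d r) × Fin (d r)) := by
    rw [← Fintype.card_pos_iff, hcards, finrank_euclideanSpace]
    exact Fintype.card_pos
  set B := basisOfLinearIndependentOfCardEqFinrank hon.linearIndependent hcards with hBdef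
  have hBcoe : ⇑B = mcvec d π := coe_basisOfLinearIndependentOfCardEqFinrank _ _
  set onb : OrthonormalBasis _ ℂ (EuclideanSpace ℂ G) :=
    B.toOrthonormalBasis (by rw [hBcoe]; exact hon) with honb
  have honbcoe : ∀ a, onb a = mcvec d π a := by
    intro a
    rw [honb, Module.Basis.coe_toOrthonormalBasis, hBcoe]
  set hE : EuclideanSpace ℂ G := WithLp.toLp 2 h with hhE
  have hnorm : ‖hE‖ ^ 2 = ∑ a, ‖(inner ℂ (onb a) hE : ℂ)‖ ^ 2 := by
    have h1 : ‖onb.repr hE‖ = ‖hE‖ := onb.repr.norm_map hE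
    rw [← h1, EuclideanSpace.norm_eq, Real.sq_sqrt (by positivity)]
    apply Finset.sum_congr rfl
    intro a _
    rw [onb.repr_apply_apply]
  have hL : ‖hE‖ ^ 2 = ∑ x, Complex.normSq (h x) := by
    rw [EuclideanSpace.norm_eq, Real.sq_sqrt (by positivity)]
    apply Finset.sum_congr rfl
    intro x _
    rw [show hE x = h x from rfl, Complex.sq_norm]
  have hR : ∀ a : (Σ r : Fin k, Fin (d r) × Fin (d r)),
      ‖(inner ℂ (onb a) hE : ℂ)‖ ^ 2
        = ((d a.1 : ℝ) / (Fintype.card G : ℝ))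
          * Complex.normSq (∑ x, (starRingEnd ℂ) ((π a.1 x) a.2.1 a.2.2) * h x) := by
    rintro ⟨r, i, j⟩
    rw [honbcoe, PiLp.inner_apply]
    have : ∀ x : G, (inner ℂ (mcvec d π ⟨r, (i,j)⟩ x) (hE x) : ℂ)
        = ((Real.sqrt (d r) / Real.sqrt (Fintype.card G) : ℝ) : ℂ)
          * ((starRingEnd ℂ) ((π r x) i j) * h x) := by
      intro x
      simp only [RCLike.inner_apply, mcvec, hhE, WithLp.ofLp_toLp, PiLp.toLp_apply, map_mul, Complex.conj_ofReal]
      ring_nf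
    rw [Finset.sum_congr rfl (fun x _ => this x), ← Finset.mul_sum]
    rw [norm_mul, mul_pow, Complex.norm_real, Complex.sq_norm]
    congr 1
    rw [Real.norm_eq_abs, abs_of_nonneg (by positivity), div_pow,
      Real.sq_sqrt (by positivity), Real.sq_sqrt (by positivity)]
  rw [← hL, hnorm]
  rw [Finset.sum_congr rfl (fun a (_ : a ∈ Finset.univ) => hR a)]
  rw [← Finset.univ_sigma_univ, Finset.sum_sigma]
  apply Finset.sum_congr rfl
  intro r _
  rw [Fintype.sum_prod_type]
end pars2

section four
variable {G : Type*} [Group G] [Fintype G]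
  {k : ℕ} {d : Fin k → ℕ}
  {π : (r : Fin k) → G →* Matrix (Fin (d r)) (Fin (d r)) ℂ}

variable (schur_ne' : ∀ {r s : Fin k}, r ≠ s → ∀ (i j : Fin (d r)) (kk l : Fin (d s)),
    ∑ x : G, (π r x) i j * (starRingEnd ℂ) ((π s x) kk l) = 0)
  (schur_eq' : ∀ (r : Fin k) (i j kk l : Fin (d r)),
    ∑ x : G, (π r x) i j * (starRingEnd ℂ) ((π r x) kk l)
      = (if i = kk then 1 else 0) * (if j = l then 1 else 0)
        * ((Fintype.card G : ℂ) / (d r : ℂ)))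
  (hdpos : ∀ r, 0 < d r)

include schur_ne' schur_eq' hdpos in
lemma gw_coeff (c : Fin k → ℂ) (r : Fin k) (i m : Fin (d r)) :
    ∑ y : G, gwavelet d π c y * (starRingEnd ℂ) ((π r y) i m)
      = (Fintype.card G : ℂ) * c r * (if i = m then 1 else 0) := by
  have expand : ∀ y : G, gwavelet d π c y * (starRingEnd ℂ) ((π r y) i m)
      = ∑ s, ∑ t, (d s : ℂ) * c s * ((π s y) t t * (starRingEnd ℂ) ((π r y) i m)) := by
    intro y
    simp only [gwavelet, Matrix.trace, Matrix.diag, Finset.sum_mul, Finset.mul_sum]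
    apply Finset.sum_congr rfl; intro s _
    apply Finset.sum_congr rfl; intro t _
    ring
  rw [Finset.sum_congr rfl (fun y _ => expand y), Finset.sum_comm]
  have inner : ∀ s : Fin k, (∑ y : G, ∑ t : Fin (d s),
      (d s : ℂ) * c s * ((π s y) t t * (starRingEnd ℂ) ((π r y) i m)))
      = (d s : ℂ) * c s * ∑ t : Fin (d s), ∑ y : G,
          (π s y) t t * (starRingEnd ℂ) ((π r y) i m) := by
    intro s
    rw [Finset.sum_comm, Finset.mul_sum]
    apply Finset.sum_congr rfl; intro t _
    rw [Finset.mul_sum]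
  rw [Finset.sum_congr rfl (fun s _ => inner s)]
  rw [Finset.sum_eq_single r ?h1 ?h2]
  · have hd : ((d r : ℂ)) ≠ 0 := Nat.cast_ne_zero.mpr (hdpos r).ne'
    rw [Finset.sum_congr rfl (fun t (_ : t ∈ Finset.univ) => schur_eq' r t t i m)]
    rcases eq_or_ne i m with h | h
    · subst h
      rw [Finset.sum_eq_single i ?ha ?hb]
      · simp only [if_pos rfl, ↓reduceIte]
        field_simp
      · intro t _ ht
        rw [if_neg ht, zero_mul, zero_mul]
      · intro hi; exact absurd (Finset.mem_univ i) hi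
    · rw [if_neg h]
      have : ∀ t : Fin (d r), ((if t = i then (1:ℂ) else 0) * (if t = m then 1 else 0)
          * ((Fintype.card G : ℂ) / (d r : ℂ))) = 0 := by
        intro t
        rcases eq_or_ne t i with h1 | h1
        · subst h1
          rw [if_neg h, mul_zero, zero_mul]
        · rw [if_neg h1, zero_mul, zero_mul]
      rw [Finset.sum_congr rfl (fun t _ => this t), Finset.sum_const_zero, mul_zero, mul_zero]
  · intro s _ hs
    rw [Finset.sum_congr rfl (fun t (_ : t ∈ Finset.univ) => schur_ne' hs t t i m),
      Finset.sum_const_zero, mul_zero]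
  · intro hr; exact absurd (Finset.mem_univ r) hr

include schur_ne' schur_eq' hdpos in
lemma conv_coeff (c : Fin k → ℂ) (h : G → ℂ) (r : Fin k) (i j : Fin (d r)) :
    ∑ x : G, (starRingEnd ℂ) ((π r x) i j) * conv (gwavelet d π c) h x
      = c r * ∑ x : G, (starRingEnd ℂ) ((π r x) i j) * h x := by
  have hN : (Fintype.card G : ℂ) ≠ 0 := Nat.cast_ne_zero.mpr Fintype.card_ne_zero
  set K := gwavelet d π c with hK
  set A : Fin (d r) → ℂ := fun m => ∑ z : G, (starRingEnd ℂ) ((π r z) m j) * h z with hA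
  have step1 : ∑ x : G, (starRingEnd ℂ) ((π r x) i j) * conv K h x
      = (Fintype.card G : ℂ)⁻¹ * ∑ y : G, ∑ x : G,
          K y * ((starRingEnd ℂ) ((π r x) i j) * h (y⁻¹ * x)) := by
    conv_rhs => rw [Finset.sum_comm]
    conv_rhs => rw [Finset.mul_sum]
    apply Finset.sum_congr rfl; intro x _
    simp only [conv, Finset.mul_sum]
    exact Finset.sum_congr rfl fun y _ => by ring
  have step2 : ∀ y : G, ∑ x : G, K y * ((starRingEnd ℂ) ((π r x) i j) * h (y⁻¹ * x))
      = ∑ m, (K y * (starRingEnd ℂ) ((π r y) i m)) * A m := by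
    intro y
    rw [← Equiv.sum_comp (Equiv.mulLeft y)
      (fun x => K y * ((starRingEnd ℂ) ((π r x) i j) * h (y⁻¹ * x)))]
    have hterm : ∀ z : G, K y * ((starRingEnd ℂ) ((π r ((Equiv.mulLeft y) z)) i j)
        * h (y⁻¹ * ((Equiv.mulLeft y) z)))
        = ∑ m, (K y * (starRingEnd ℂ) ((π r y) i m))
            * ((starRingEnd ℂ) ((π r z) m j) * h z) := by
      intro z
      have hmul : (Equiv.mulLeft y) z = y * z := rfl
      rw [hmul, inv_mul_cancel_left, map_mul, Matrix.mul_apply, map_sum]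
      simp only [Finset.sum_mul, Finset.mul_sum]
      apply Finset.sum_congr rfl; intro m _
      rw [map_mul]
      ring
    rw [Finset.sum_congr rfl (fun z _ => hterm z), Finset.sum_comm]
    apply Finset.sum_congr rfl; intro m _
    rw [hA, Finset.mul_sum]
  rw [step1, Finset.sum_congr rfl (fun y (_ : y ∈ Finset.univ) => step2 y), Finset.sum_comm]
  have step3 : ∀ m, ∑ y : G, (K y * (starRingEnd ℂ) ((π r y) i m)) * A m
      = ((Fintype.card G : ℂ) * c r * (if i = m then 1 else 0)) * A m := by
    intro m
    rw [← Finset.sum_mul, gw_coeff schur_ne' schur_eq' hdpos c r i m]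
  rw [Finset.sum_congr rfl (fun m (_ : m ∈ Finset.univ) => step3 m)]
  rw [Finset.sum_eq_single i ?ha ?hb]
  · rw [if_pos rfl, mul_one]
    rw [← mul_assoc, ← mul_assoc, inv_mul_cancel₀ hN, one_mul, hA]
  · intro m _ hm
    simp [if_neg (Ne.symm hm)]
  · intro hi; exact absurd (Finset.mem_univ i) hi
end four

noncomputable def fcoef {G : Type*} [Group G] [Fintype G] {k : ℕ} (d : Fin k → ℕ)
    (π : (r : Fin k) → G →* Matrix (Fin (d r)) (Fin (d r)) ℂ)
    (h : G → ℂ) (r : Fin k) (i j : Fin (d r)) : ℂ :=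
  ∑ x, (starRingEnd ℂ) ((π r x) i j) * h x

section anal
variable {G : Type*} [Group G] [Fintype G]
  {k : ℕ} {d : Fin k → ℕ}
  {π : (r : Fin k) → G →* Matrix (Fin (d r)) (Fin (d r)) ℂ}

lemma nsq_nonneg (h : G → ℂ) : 0 ≤ nsq h :=
  mul_nonneg (inv_nonneg.mpr (Nat.cast_nonneg _))
    (Finset.sum_nonneg fun x _ => Complex.normSq_nonneg _)

lemma nsq_mono {u v : G → ℂ} (h : ∀ x, Complex.normSq (u x) ≤ Complex.normSq (v x)) :
    nsq u ≤ nsq v :=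
  mul_le_mul_of_nonneg_left (Finset.sum_le_sum fun x _ => h x)
    (inv_nonneg.mpr (Nat.cast_nonneg _))

lemma nsq_zero_iff (h : G → ℂ) (hz : nsq h = 0) : ∀ x, h x = 0 := by
  intro x
  have hN : (0:ℝ) < (Fintype.card G : ℝ) := by positivity
  have hs : ∑ y, Complex.normSq (h y) = 0 := by
    have := hz
    rw [nsq] at this
    field_simp at this
    simpa using this
  have := (Finset.sum_eq_zero_iff_of_nonneg
    (fun y _ => Complex.normSq_nonneg (h y))).mp hs x (Finset.mem_univ x)
  exact Complex.normSq_eq_zero.mp this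

lemma conv_sub (K g g' : G → ℂ) :
    (fun x => conv K g x - conv K g' x) = conv K (fun x => g x - g' x) := by
  funext x
  rw [conv, conv, conv, ← mul_sub, ← Finset.sum_sub_distrib]
  congr 1
  apply Finset.sum_congr rfl
  intro y _
  ring

lemma abs_nonexp (a b : ℂ) :
    Complex.normSq (((‖a‖ : ℝ) : ℂ) - ((‖b‖ : ℝ) : ℂ))
      ≤ Complex.normSq (a - b) := by
  rw [← Complex.ofReal_sub, Complex.normSq_ofReal]
  have h1 : |‖a‖ - ‖b‖| ≤ ‖a - b‖ :=
    abs_norm_sub_norm_le a b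
  calc (‖a‖ - ‖b‖) * (‖a‖ - ‖b‖)
      = |‖a‖ - ‖b‖| * |‖a‖ - ‖b‖| := by
        rw [abs_mul_abs_self]
    _ ≤ ‖a - b‖ * ‖a - b‖ :=
        mul_self_le_mul_self (abs_nonneg _) h1
    _ = Complex.normSq (a - b) := by rw [Complex.normSq_eq_norm_sq, sq]

variable (hPars : ∀ h : G → ℂ, ∑ x, Complex.normSq (h x)
    = ∑ r : Fin k, ∑ i : Fin (d r), ∑ j : Fin (d r),
        ((d r : ℝ) / (Fintype.card G : ℝ)) * Complex.normSq (fcoef d π h r i j))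
  (hcc : ∀ (c : Fin k → ℂ) (h : G → ℂ) (r : Fin k) (i j : Fin (d r)),
    fcoef d π (conv (gwavelet d π c) h) r i j = c r * fcoef d π h r i j)

include hPars hcc in
lemma nsq_conv_energy (c : Fin k → ℂ) (h : G → ℂ) :
    nsq (conv (gwavelet d π c) h)
      = (Fintype.card G : ℝ)⁻¹ * ∑ r : Fin k, ∑ i : Fin (d r), ∑ j : Fin (d r),
          ((d r : ℝ) / (Fintype.card G : ℝ))
            * (Complex.normSq (c r) * Complex.normSq (fcoef d π h r i j)) := by
  rw [nsq, hPars]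
  congr 1
  apply Finset.sum_congr rfl; intro r _
  apply Finset.sum_congr rfl; intro i _
  apply Finset.sum_congr rfl; intro j _
  rw [hcc, Complex.normSq_mul]

include hPars in
lemma nsq_energy (h : G → ℂ) :
    nsq h = (Fintype.card G : ℝ)⁻¹ * ∑ r : Fin k, ∑ i : Fin (d r), ∑ j : Fin (d r),
        ((d r : ℝ) / (Fintype.card G : ℝ)) * Complex.normSq (fcoef d π h r i j) := by
  rw [nsq, hPars]

include hPars hcc in
lemma beta_bound (c : Fin k → ℂ) (β : ℝ) (hβ : ∀ r : Fin k, β ≤ Complex.normSq (c r))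
    (h : G → ℂ) : β * nsq h ≤ nsq (conv (gwavelet d π c) h) := by
  rw [nsq_energy hPars, nsq_conv_energy hPars hcc]
  have hNi : (0:ℝ) ≤ (Fintype.card G : ℝ)⁻¹ := inv_nonneg.mpr (Nat.cast_nonneg _)
  calc β * ((Fintype.card G : ℝ)⁻¹ * ∑ r : Fin k, ∑ i : Fin (d r), ∑ j : Fin (d r),
          ((d r : ℝ) / (Fintype.card G : ℝ)) * Complex.normSq (fcoef d π h r i j))
      = (Fintype.card G : ℝ)⁻¹ * ∑ r : Fin k, ∑ i : Fin (d r), ∑ j : Fin (d r),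
          β * (((d r : ℝ) / (Fintype.card G : ℝ)) * Complex.normSq (fcoef d π h r i j)) := by
        rw [← mul_assoc, mul_comm β, mul_assoc]
        congr 1
        rw [Finset.mul_sum]
        apply Finset.sum_congr rfl; intro r _
        rw [Finset.mul_sum]
        apply Finset.sum_congr rfl; intro i _
        rw [Finset.mul_sum]
    _ ≤ (Fintype.card G : ℝ)⁻¹ * ∑ r : Fin k, ∑ i : Fin (d r), ∑ j : Fin (d r),
          ((d r : ℝ) / (Fintype.card G : ℝ))
            * (Complex.normSq (c r) * Complex.normSq (fcoef d π h r i j)) := by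
        apply mul_le_mul_of_nonneg_left _ hNi
        apply Finset.sum_le_sum; intro r _
        apply Finset.sum_le_sum; intro i _
        apply Finset.sum_le_sum; intro j _
        have hd : (0:ℝ) ≤ (d r : ℝ) / (Fintype.card G : ℝ) := by positivity
        calc β * (((d r : ℝ) / (Fintype.card G : ℝ)) * Complex.normSq (fcoef d π h r i j))
            = ((d r : ℝ) / (Fintype.card G : ℝ))
              * (β * Complex.normSq (fcoef d π h r i j)) := by ring
          _ ≤ ((d r : ℝ) / (Fintype.card G : ℝ))
              * (Complex.normSq (c r) * Complex.normSq (fcoef d π h r i j)) := by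
              apply mul_le_mul_of_nonneg_left _ hd
              exact mul_le_mul_of_nonneg_right (hβ r) (Complex.normSq_nonneg _)

include hPars hcc in
lemma plancherel_family {J : ℕ} (γ : Fin (J + 1) → Fin k → ℂ)
    (hPar : ∀ r : Fin k, ∑ j : Fin (J + 1), Complex.normSq (γ j r) = 1) (h : G → ℂ) :
    ∑ jj : Fin (J + 1), nsq (conv (gwavelet d π (γ jj)) h) = nsq h := by
  rw [Finset.sum_congr rfl (fun jj (_ : jj ∈ Finset.univ) => nsq_conv_energy hPars hcc (γ jj) h)]
  rw [← Finset.mul_sum, nsq_energy hPars]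
  congr 1
  rw [Finset.sum_comm]
  apply Finset.sum_congr rfl; intro r _
  rw [Finset.sum_comm]
  apply Finset.sum_congr rfl; intro i _
  rw [Finset.sum_comm]
  apply Finset.sum_congr rfl; intro j _
  calc ∑ jj : Fin (J + 1), ((d r : ℝ) / (Fintype.card G : ℝ))
        * (Complex.normSq (γ jj r) * Complex.normSq (fcoef d π h r i j))
      = ((d r : ℝ) / (Fintype.card G : ℝ))
        * ((∑ jj : Fin (J + 1), Complex.normSq (γ jj r)) * Complex.normSq (fcoef d π h r i j)) := by
        rw [← Finset.mul_sum, ← Finset.sum_mul]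
    _ = ((d r : ℝ) / (Fintype.card G : ℝ)) * Complex.normSq (fcoef d π h r i j) := by
        rw [hPar r, one_mul]
end anal

section scat
variable {G : Type*} [Group G] [Fintype G]
  {k : ℕ} {d : Fin k → ℕ}
  {π : (r : Fin k) → G →* Matrix (Fin (d r)) (Fin (d r)) ℂ}

variable (hPars : ∀ h : G → ℂ, ∑ x, Complex.normSq (h x)
    = ∑ r : Fin k, ∑ i : Fin (d r), ∑ j : Fin (d r),
        ((d r : ℝ) / (Fintype.card G : ℝ)) * Complex.normSq (fcoef d π h r i j))
  (hcc : ∀ (c : Fin k → ℂ) (h : G → ℂ) (r : Fin k) (i j : Fin (d r)),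
    fcoef d π (conv (gwavelet d π c) h) r i j = c r * fcoef d π h r i j)

include hPars hcc in
lemma onestep {J : ℕ} (γ : Fin (J + 1) → Fin k → ℂ)
    (hPar : ∀ r : Fin k, ∑ j : Fin (J + 1), Complex.normSq (γ j r) = 1) (g g' : G → ℂ) :
    nsq (fun x => conv (gwavelet d π (γ 0)) g x - conv (gwavelet d π (γ 0)) g' x)
      + ∑ j : Fin J, nsq (fun x =>
          ((‖conv (gwavelet d π (γ j.succ)) g x‖ : ℝ) : ℂ)
            - ((‖conv (gwavelet d π (γ j.succ)) g' x‖ : ℝ) : ℂ))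
      ≤ nsq (fun x => g x - g' x) := by
  have h0 : nsq (fun x => conv (gwavelet d π (γ 0)) g x - conv (gwavelet d π (γ 0)) g' x)
      = nsq (conv (gwavelet d π (γ 0)) (fun x => g x - g' x)) := by rw [conv_sub]
  have hj : ∀ j : Fin J, nsq (fun x =>
        ((‖conv (gwavelet d π (γ j.succ)) g x‖ : ℝ) : ℂ)
          - ((‖conv (gwavelet d π (γ j.succ)) g' x‖ : ℝ) : ℂ))
      ≤ nsq (conv (gwavelet d π (γ j.succ)) (fun x => g x - g' x)) := by
    intro j
    rw [← conv_sub]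
    exact nsq_mono fun x => abs_nonexp _ _
  calc nsq (fun x => conv (gwavelet d π (γ 0)) g x - conv (gwavelet d π (γ 0)) g' x)
        + ∑ j : Fin J, nsq (fun x =>
            ((‖conv (gwavelet d π (γ j.succ)) g x‖ : ℝ) : ℂ)
              - ((‖conv (gwavelet d π (γ j.succ)) g' x‖ : ℝ) : ℂ))
      ≤ nsq (conv (gwavelet d π (γ 0)) (fun x => g x - g' x))
        + ∑ j : Fin J, nsq (conv (gwavelet d π (γ j.succ)) (fun x => g x - g' x)) := by
        rw [h0]
        exact add_le_add (le_refl _) (Finset.sum_le_sum fun j _ => hj j)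
    _ = ∑ jj : Fin (J + 1), nsq (conv (gwavelet d π (γ jj)) (fun x => g x - g' x)) := by
        rw [Fin.sum_univ_succ]
    _ = nsq (fun x => g x - g' x) := plancherel_family hPars hcc γ hPar _

lemma sum_paths {J m : ℕ} (F : (Fin (m + 1) → Fin J) → ℝ) :
    ∑ q : Fin (m + 1) → Fin J, F q
      = ∑ j : Fin J, ∑ p : Fin m → Fin J, F (Fin.cons j p) := by
  rw [← Equiv.sum_comp (Fin.consEquiv (fun _ => Fin J)) F, Fintype.sum_prod_type]
  rfl

lemma ofFn_cons {J m : ℕ} (j : Fin J) (p : Fin m → Fin J) :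
    List.ofFn (Fin.cons j p : Fin (m + 1) → Fin J) = j :: List.ofFn p := by
  rw [List.ofFn_succ]
  congr 1

lemma upath_cons {J n : ℕ} (ψ : Fin J → G → ℂ) (j : Fin J) (q : Fin n → Fin J) (u : G → ℂ) :
    Upath ψ (List.ofFn (Fin.cons j q)) u
      = Upath ψ (List.ofFn q) (fun x => ((‖conv (ψ j) u x‖ : ℝ) : ℂ)) := by
  rw [ofFn_cons]
  rfl

lemma sop_cons {J n : ℕ} (γ : Fin (J + 1) → Fin k → ℂ) (j : Fin J) (q : Fin n → Fin J)
    (u : G → ℂ) :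
    Sop d π γ (List.ofFn (Fin.cons j q)) u
      = Sop d π γ (List.ofFn q)
          (fun x => ((‖conv (gwavelet d π (γ j.succ)) u x‖ : ℝ) : ℂ)) := by
  rw [Sop, Sop, upath_cons]

include hPars hcc in
lemma screc {J : ℕ} (γ : Fin (J + 1) → Fin k → ℂ)
    (hPar : ∀ r : Fin k, ∑ j : Fin (J + 1), Complex.normSq (γ j r) = 1) :
    ∀ (m : ℕ) (g g' : G → ℂ),
    (∑ p : Fin m → Fin J, nsq (fun x =>
        Sop d π γ (List.ofFn p) g x - Sop d π γ (List.ofFn p) g' x))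
      + ∑ q : Fin (m + 1) → Fin J, nsq (fun x =>
          Upath (fun j => gwavelet d π (γ j.succ)) (List.ofFn q) g x
            - Upath (fun j => gwavelet d π (γ j.succ)) (List.ofFn q) g' x)
      ≤ ∑ p : Fin m → Fin J, nsq (fun x =>
          Upath (fun j => gwavelet d π (γ j.succ)) (List.ofFn p) g x
            - Upath (fun j => gwavelet d π (γ j.succ)) (List.ofFn p) g' x) := by
  intro m
  induction m with
  | zero =>
    intro g g'
    rw [Fintype.sum_subsingleton _ (Fin.elim0 : Fin 0 → Fin J),
      Fintype.sum_subsingleton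
        (fun p : Fin 0 → Fin J => nsq (fun x =>
          Upath (fun j => gwavelet d π (γ j.succ)) (List.ofFn p) g x
            - Upath (fun j => gwavelet d π (γ j.succ)) (List.ofFn p) g' x))
        (Fin.elim0 : Fin 0 → Fin J),
      sum_paths]
    have hq : ∀ j : Fin J, ∑ p : Fin 0 → Fin J, nsq (fun x =>
        Upath (fun j' => gwavelet d π (γ j'.succ)) (List.ofFn (Fin.cons j p)) g x
          - Upath (fun j' => gwavelet d π (γ j'.succ)) (List.ofFn (Fin.cons j p)) g' x)
        = nsq (fun x =>
            ((‖conv (gwavelet d π (γ j.succ)) g x‖ : ℝ) : ℂ)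
              - ((‖conv (gwavelet d π (γ j.succ)) g' x‖ : ℝ) : ℂ)) := by
      intro j
      rw [Fintype.sum_subsingleton _ (Fin.elim0 : Fin 0 → Fin J)]
      rfl
    rw [Finset.sum_congr rfl (fun j _ => hq j)]
    exact onestep hPars hcc γ hPar g g'
  | succ m ih =>
    intro g g'
    rw [sum_paths, sum_paths, sum_paths, ← Finset.sum_add_distrib]
    apply Finset.sum_le_sum
    intro j _
    simp only [upath_cons, sop_cons]
    exact ih (fun x => ((‖conv (gwavelet d π (γ j.succ)) g x‖ : ℝ) : ℂ))
      (fun x => ((‖conv (gwavelet d π (γ j.succ)) g' x‖ : ℝ) : ℂ))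
end scat

theorem stmt12 {G : Type*} [Group G] [Fintype G]
    {k : ℕ} (d : Fin k → ℕ) (hdpos : ∀ r, 0 < d r)
    (π : (r : Fin k) → G →* Matrix (Fin (d r)) (Fin (d r)) ℂ)
    (hunit : ∀ r x, π r x ∈ Matrix.unitaryGroup (Fin (d r)) ℂ)
    (hirr : ∀ (r : Fin k) (M : Matrix (Fin (d r)) (Fin (d r)) ℂ),
      (∀ x, M * π r x = π r x * M) → ∃ c : ℂ, M = c • (1 : Matrix (Fin (d r)) (Fin (d r)) ℂ))
    (hneq : ∀ (r s : Fin k), r ≠ s → ∀ T : Matrix (Fin (d r)) (Fin (d s)) ℂ,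
      (∀ x, π r x * T = T * π s x) → T = 0)
    (hcard : Nat.card (ConjClasses G) = k)
    {J : ℕ} (γ : Fin (J + 1) → Fin k → ℂ)
    (hPar : ∀ r : Fin k, ∑ j : Fin (J + 1), Complex.normSq (γ j r) = 1)
    (β : ℝ) (hβpos : 0 < β) (hβ : ∀ r : Fin k, β ≤ Complex.normSq (γ 0 r))
    (f f' : G → ℂ) :
    (∑' m : ℕ, ∑ p : Fin m → Fin J,
        nsq (fun x => Sop d π γ (List.ofFn p) f x - Sop d π γ (List.ofFn p) f' x)
      ≥ nsq (conv (gwavelet d π (γ 0)) (fun x => f x - f' x))) ∧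
    nsq (conv (gwavelet d π (γ 0)) (fun x => f x - f' x))
      ≥ β * nsq (fun x => f x - f' x) ∧
    ((∀ (m : ℕ) (p : Fin m → Fin J),
        Sop d π γ (List.ofFn p) f = Sop d π γ (List.ofFn p) f') → f = f') := by
  classical
  have sne : ∀ {r s : Fin k}, r ≠ s → ∀ (i j : Fin (d r)) (kk l : Fin (d s)),
      ∑ x : G, (π r x) i j * (starRingEnd ℂ) ((π s x) kk l) = 0 :=
    fun {r s} hrs => schur_ne hunit hneq hrs
  have seq : ∀ (r : Fin k) (i j kk l : Fin (d r)),
      ∑ x : G, (π r x) i j * (starRingEnd ℂ) ((π r x) kk l)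
        = (if i = kk then 1 else 0) * (if j = l then 1 else 0)
          * ((Fintype.card G : ℂ) / (d r : ℂ)) :=
    schur_eq hdpos hunit hirr
  have corth := char_orth (π := π) sne seq hdpos
  have hdim := sum_d_sq corth hcard
  have hon := mcvec_orthonormal (π := π) sne seq hdpos
  have hPars : ∀ h : G → ℂ, ∑ x, Complex.normSq (h x)
      = ∑ r : Fin k, ∑ i : Fin (d r), ∑ j : Fin (d r),
          ((d r : ℝ) / (Fintype.card G : ℝ)) * Complex.normSq (fcoef d π h r i j) :=
    fun h => parseval hon hdim hdpos h
  have hcc : ∀ (c : Fin k → ℂ) (h : G → ℂ) (r : Fin k) (i j : Fin (d r)),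
      fcoef d π (conv (gwavelet d π c) h) r i j = c r * fcoef d π h r i j :=
    fun c h r i j => conv_coeff sne seq hdpos c h r i j
  -- notation
  set S : ℕ → ℝ := fun m => ∑ p : Fin m → Fin J,
    nsq (fun x => Sop d π γ (List.ofFn p) f x - Sop d π γ (List.ofFn p) f' x) with hSdef
  set U : ℕ → ℝ := fun m => ∑ p : Fin m → Fin J,
    nsq (fun x => Upath (fun j => gwavelet d π (γ j.succ)) (List.ofFn p) f x
      - Upath (fun j => gwavelet d π (γ j.succ)) (List.ofFn p) f' x) with hUdef
  have hrec : ∀ m, S m + U (m + 1) ≤ U m := fun m => screc hPars hcc γ hPar m f f'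
  have hU0 : U 0 = nsq (fun x => f x - f' x) := by
    simp only [hUdef]
    rw [Fintype.sum_subsingleton _ (Fin.elim0 : Fin 0 → Fin J)]
    rw [show (List.ofFn (Fin.elim0 : Fin 0 → Fin J)) = [] from List.ofFn_zero]
    rfl
  have hS0 : S 0 = nsq (conv (gwavelet d π (γ 0)) (fun x => f x - f' x)) := by
    simp only [hSdef]
    rw [Fintype.sum_subsingleton _ (Fin.elim0 : Fin 0 → Fin J)]
    rw [show (List.ofFn (Fin.elim0 : Fin 0 → Fin J)) = [] from List.ofFn_zero, ← conv_sub]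
    rfl
  have hSnn : ∀ m, 0 ≤ S m := fun m => Finset.sum_nonneg fun p _ => nsq_nonneg _
  have hUnn : ∀ m, 0 ≤ U m := fun m => Finset.sum_nonneg fun p _ => nsq_nonneg _
  have hpartial : ∀ M, (∑ m ∈ Finset.range M, S m) + U M ≤ U 0 := by
    intro M
    induction M with
    | zero => simp
    | succ M ihM =>
      rw [Finset.sum_range_succ]
      have h1 := hrec M
      linarith
  have hbound : ∀ M, (∑ m ∈ Finset.range M, S m) ≤ nsq (fun x => f x - f' x) := by
    intro M
    have h1 := hpartial M
    have h2 := hUnn M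
    rw [hU0] at h1
    linarith
  have hsum : Summable S := summable_of_sum_range_le hSnn hbound
  refine ⟨?_, ?_, ?_⟩
  · have h1 : S 0 ≤ ∑' m, S m := Summable.le_tsum hsum 0 (fun j _ => hSnn j)
    rw [hS0] at h1
    exact h1
  · exact beta_bound hPars hcc (γ 0) β hβ (fun x => f x - f' x)
  · intro hcoll
    have h0 := hcoll 0 (Fin.elim0 : Fin 0 → Fin J)
    have hz : nsq (conv (gwavelet d π (γ 0)) (fun x => f x - f' x)) = 0 := by
      rw [← hS0]
      simp only [hSdef]
      rw [Fintype.sum_subsingleton _ (Fin.elim0 : Fin 0 → Fin J)]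
      rw [h0]
      simp [nsq]
    have hb := beta_bound hPars hcc (γ 0) β hβ (fun x => f x - f' x)
    rw [hz] at hb
    have hnn := nsq_nonneg (G := G) (fun x => f x - f' x)
    have hzero : nsq (fun x => f x - f' x) = 0 := by nlinarith
    funext x
    have := nsq_zero_iff _ hzero x
    exact sub_eq_zero.mp this
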